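/- Let n ≥ 1 be an integer. Let r(1), …, r(n) and c(1), …, c(n) be reals with r(j) ∈ [2^(4j+2−5n), 2^(4j+3−5n)] and c(j) ∈ [2^(4j−5n), 2^(4j+1−5n)] for each j, and let ε_max and δ_max be reals in [0, 2^(−100n)]. Then for every i with 1 ≤ i ≤ n: c(i) > δ_max + 2n·ε_max + Σ_{j=1}^{i−1} r(j). -/

import Mathlib

lemma sum_r_bound (n : ℕ) (r : ℕ → ℝ)
    (hr : ∀ j, 1 ≤ j → j ≤ n → r j ≤ (2 : ℝ) ^ (4 * (j : ℤ) + 3 - 5 * (n : ℤ))) :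
    ∀ m, m ≤ n → ∑ j ∈ Finset.Icc 1 m, r j ≤
      (8 / 15) * (2 : ℝ) ^ (4 * (m : ℤ) + 4 - 5 * (n : ℤ)) := by
  intro m
  induction m with
  | zero =>
    intro _
    simp
    positivity
  | succ m ih =>
    intro hm
    rw [Finset.sum_Icc_succ_top (by omega : 1 ≤ m + 1)]
    have h1 := ih (by omega)
    have h2 := hr (m + 1) (by omega) hm
    have e1 : (4 * ((m : ℤ) + 1) + 3 - 5 * n) = (4 * (m : ℤ) + 4 - 5 * n) + 3 := by ring
    have e2 : (4 * ((m : ℤ) + 1) + 4 - 5 * n) = (4 * (m : ℤ) + 4 - 5 * n) + 4 := by ring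
    push_cast [e1, e2] at *
    rw [zpow_add₀ (by norm_num : (2:ℝ) ≠ 0)] at h2 ⊢
    norm_num
    nlinarith [h1, h2]

/-- Reachability-parameter version of Proposition 6: with rewards
r(j) ∈ [2^(4j+2−5n), 2^(4j+3−5n)], costs c(j) ∈ [2^(4j−5n), 2^(4j+1−5n)], and small
quantities ε_max, δ_max ∈ [0, 2^(−100n)], the cost c(i) exceeds all small
rewards/costs plus the sum of all lower bits' rewards. -/
theorem reachability_params_prop6 (n : ℕ) (hn : 1 ≤ n)
    (r c : ℕ → ℝ)
    (hr : ∀ j, 1 ≤ j → j ≤ n →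
      r j ∈ Set.Icc ((2 : ℝ) ^ (4 * (j : ℤ) + 2 - 5 * (n : ℤ)))
        ((2 : ℝ) ^ (4 * (j : ℤ) + 3 - 5 * (n : ℤ))))
    (hc : ∀ j, 1 ≤ j → j ≤ n →
      c j ∈ Set.Icc ((2 : ℝ) ^ (4 * (j : ℤ) - 5 * (n : ℤ)))
        ((2 : ℝ) ^ (4 * (j : ℤ) + 1 - 5 * (n : ℤ))))
    (εmax δmax : ℝ)
    (hε : εmax ∈ Set.Icc (0 : ℝ) ((2 : ℝ) ^ (-(100 * (n : ℤ)))))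
    (hδ : δmax ∈ Set.Icc (0 : ℝ) ((2 : ℝ) ^ (-(100 * (n : ℤ))))) :
    ∀ i, 1 ≤ i → i ≤ n →
      c i > δmax + 2 * (n : ℝ) * εmax + ∑ j ∈ Finset.Icc 1 (i - 1), r j := by
  intro i hi hin
  -- abbreviation X = 2 ^ (4i - 5n)
  set X : ℝ := (2 : ℝ) ^ (4 * (i : ℤ) - 5 * (n : ℤ)) with hX
  have hci : X ≤ c i := (hc i hi hin).1
  -- sum bound
  have hsum : ∑ j ∈ Finset.Icc 1 (i - 1), r j ≤ (8 / 15) * X := by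
    have := sum_r_bound n r (fun j h1 h2 => (hr j h1 h2).2) (i - 1) (by omega)
    have e : (4 * ((i - 1 : ℕ) : ℤ) + 4 - 5 * n) = 4 * (i : ℤ) - 5 * n := by
      have : ((i - 1 : ℕ) : ℤ) = (i : ℤ) - 1 := by omega
      rw [this]; ring
    rwa [e] at this
  -- small terms bound
  have hsmall : δmax + 2 * (n : ℝ) * εmax ≤ (2 * (n : ℝ) + 1) * (2 : ℝ) ^ (-(100 * (n : ℤ))) := by
    have h1 := hδ.2
    have h2 := hε.2
    have h3 := hε.1
    have hn0 : (0:ℝ) ≤ (n:ℝ) := by positivity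
    nlinarith
  have hpow : (2 * (n : ℝ) + 1) * (2 : ℝ) ^ (-(100 * (n : ℤ))) ≤ (1 / 4) * X := by
    have h1 : (2 * (n : ℝ) + 1) ≤ (2 : ℝ) ^ ((n : ℤ) + 1) := by
      have : (2 * n + 1 : ℕ) ≤ 2 ^ (n + 1) := by
        have := Nat.lt_two_pow_self (n := n)
        calc 2 * n + 1 ≤ 2 * (n + 1) := by omega
        _ ≤ 2 * 2 ^ n := by omega
        _ = 2 ^ (n + 1) := by ring
      calc (2 * (n : ℝ) + 1) = ((2 * n + 1 : ℕ) : ℝ) := by push_cast; ring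
      _ ≤ ((2 ^ (n + 1) : ℕ) : ℝ) := by exact_mod_cast this
      _ = (2 : ℝ) ^ ((n : ℤ) + 1) := by push_cast; rw [← zpow_natCast]; push_cast; ring_nf
    have h2 : (2 : ℝ) ^ ((n : ℤ) + 1) * (2 : ℝ) ^ (-(100 * (n : ℤ)))
        = (2 : ℝ) ^ ((n : ℤ) + 1 - 100 * n) := by
      rw [← zpow_add₀ (by norm_num : (2:ℝ) ≠ 0)]; ring_nf
    have h3 : (2 : ℝ) ^ ((n : ℤ) + 1 - 100 * n) ≤ (2 : ℝ) ^ (4 * (i : ℤ) - 5 * n - 2) := by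
      apply zpow_le_zpow_right₀ (by norm_num)
      omega
    have h4 : (2 : ℝ) ^ (4 * (i : ℤ) - 5 * n - 2) = (1 / 4) * X := by
      rw [hX, show (4 * (i : ℤ) - 5 * n - 2) = (4 * (i : ℤ) - 5 * n) + (-2) by ring,
        zpow_add₀ (by norm_num : (2:ℝ) ≠ 0)]
      norm_num
      ring
    have hp : (0:ℝ) < (2 : ℝ) ^ (-(100 * (n : ℤ))) := by positivity
    calc (2 * (n : ℝ) + 1) * (2 : ℝ) ^ (-(100 * (n : ℤ)))
        ≤ (2 : ℝ) ^ ((n : ℤ) + 1) * (2 : ℝ) ^ (-(100 * (n : ℤ))) := by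
          apply mul_le_mul_of_nonneg_right h1 hp.le
      _ = (2 : ℝ) ^ ((n : ℤ) + 1 - 100 * n) := h2
      _ ≤ (1 / 4) * X := h4 ▸ h3
  have hXpos : (0:ℝ) < X := by positivity
  nlinarith
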